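/- A point q₁ ∈ ℝ³ belongs to B₂ if and only if there exist T ≥ 0 and a P2-admissible curve q : [0,T] → ℝ³ with q(0) = (0,0,0) and q(T) = q₁. In other words, the attainable set of the second flat sub-Lorentzian Martinet problem from the origin (the causal future of the origin) is exactly B₂. -/

import Mathlib

open MeasureTheory Set Filter Topology

noncomputable section

/-- A curve `(x, y, z) : [0, T] → ℝ³` is admissible for the second flat sub-Lorentzian
problem on the Martinet distribution: it is Lipschitz on `[0, T]` and for a.e.
`t ∈ [0, T]` it is differentiable with `x' ≥ |y'|` and `z' = x² y' / 2`. -/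
def P2Admissible (T : ℝ) (x y z : ℝ → ℝ) : Prop :=
  0 ≤ T ∧
  (∃ K : NNReal, LipschitzOnWith K x (Icc 0 T) ∧ LipschitzOnWith K y (Icc 0 T) ∧
    LipschitzOnWith K z (Icc 0 T)) ∧
  ∀ᵐ t ∂(volume.restrict (Icc 0 T)),
    HasDerivAt x (deriv x t) t ∧ HasDerivAt y (deriv y t) t ∧ HasDerivAt z (deriv z t) t ∧
    |deriv y t| ≤ deriv x t ∧ deriv z t = (x t) ^ 2 * deriv y t / 2

/-- The sub-Lorentzian length of an admissible curve of the second problem. -/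
def P2Length (T : ℝ) (x y : ℝ → ℝ) : ℝ :=
  ∫ t in (0:ℝ)..T, Real.sqrt ((deriv x t) ^ 2 - (deriv y t) ^ 2)

/-- `q₁` is reachable from the origin by a P2-admissible curve. -/
def P2Reaches (q₁ : ℝ × ℝ × ℝ) : Prop :=
  ∃ (T : ℝ) (x y z : ℝ → ℝ), P2Admissible T x y z ∧
    x 0 = 0 ∧ y 0 = 0 ∧ z 0 = 0 ∧ (x T, y T, z T) = q₁

/-- The sub-Lorentzian distance from the origin in the second problem: the supremum
of lengths of P2-admissible curves from the origin to `q₁` (`0` if there are none). -/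
def P2dist (q₁ : ℝ × ℝ × ℝ) : ℝ :=
  sSup (insert 0 {l : ℝ | ∃ (T : ℝ) (x y z : ℝ → ℝ), P2Admissible T x y z ∧
    x 0 = 0 ∧ y 0 = 0 ∧ z 0 = 0 ∧ (x T, y T, z T) = q₁ ∧ l = P2Length T x y})

/-- The candidate attainable set `B₂` of the second problem. -/
def B2 : Set (ℝ × ℝ × ℝ) :=
  {p | |p.2.1| ≤ p.1 ∧ ((p.1 + p.2.1) ^ 3 - 4 * p.1 ^ 3) / 24 ≤ p.2.2 ∧
    p.2.2 ≤ (4 * p.1 ^ 3 - (p.1 - p.2.1) ^ 3) / 24}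

lemma seq_tendsto_ne : Tendsto (fun n : ℕ => (1:ℝ)/(n+1)) atTop (𝓝[≠] 0) := by
  refine tendsto_nhdsWithin_of_tendsto_nhds_of_eventually_within _
    tendsto_one_div_add_atTop_nhds_zero_nat ?_
  filter_upwards with n
  have : (0:ℝ) < 1/(n+1) := by positivity
  exact fun h => absurd h this.ne'

lemma lip_mono {f : ℝ → ℝ} {K : NNReal} (hf : LipschitzWith K f) {a b : ℝ} (hab : a ≤ b)
    (hd : ∀ᵐ t ∂(volume.restrict (Ioc a b)), HasDerivAt f (deriv f t) t ∧ 0 ≤ deriv f t) :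
    f a ≤ f b := by
  have hcont : Continuous f := hf.continuous
  have hInt : ∀ u v : ℝ, IntervalIntegrable f volume u v := fun u v =>
    hcont.intervalIntegrable u v
  set h : ℕ → ℝ := fun n => (1:ℝ)/(n+1) with hh
  have hpos : ∀ n, 0 < h n := fun n => by positivity
  set F : ℕ → ℝ → ℝ := fun n t => (f (t + h n) - f t) / h n with hF
  -- Step A : dominated convergence
  have stepA : Tendsto (fun n => ∫ t in Ioc a b, F n t) atTop
      (𝓝 (∫ t in Ioc a b, deriv f t)) := by
    apply tendsto_integral_of_dominated_convergence (fun _ => (K:ℝ))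
    · intro n
      exact (((hcont.comp (continuous_id.add continuous_const)).sub hcont).div_const
        _).aestronglyMeasurable
    · exact integrableOn_const measure_Ioc_lt_top.ne
    · intro n
      filter_upwards with t
      have h1 : |f (t + h n) - f t| ≤ K * |t + h n - t| := by
        simpa [Real.dist_eq] using hf.dist_le_mul (t + h n) t
      simp only [add_sub_cancel_left, abs_of_pos (hpos n)] at h1
      rw [Real.norm_eq_abs, abs_div, abs_of_pos (hpos n), div_le_iff₀ (hpos n)]
      simpa [mul_comm] using h1
    · filter_upwards [hd] with t ht
      have := (hasDerivAt_iff_tendsto_slope_zero.1 ht.1).comp seq_tendsto_ne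
      simpa [hF, hh, Function.comp_def, smul_eq_mul, div_eq_inv_mul, one_div] using this
  -- Step B : the integral of the difference quotient
  have stepB : ∀ n, ∫ t in Ioc a b, F n t
      = ((∫ x in b..(b + h n), f x) - ∫ x in a..(a + h n), f x) / h n := by
    intro n
    rw [← intervalIntegral.integral_of_le hab]
    have i1 : IntervalIntegrable (fun t => f (t + h n)) volume a b := by
      have := (hInt (a + h n) (b + h n)).comp_add_right (h n)
      simpa using this
    calc ∫ t in a..b, F n t
        = (∫ t in a..b, (f (t + h n) - f t)) / h n := by
          rw [intervalIntegral.integral_div]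
      _ = ((∫ t in a..b, f (t + h n)) - ∫ t in a..b, f t) / h n := by
          rw [intervalIntegral.integral_sub i1 (hInt a b)]
      _ = ((∫ x in b..(b + h n), f x) - ∫ x in a..(a + h n), f x) / h n := by
          congr 1
          rw [intervalIntegral.integral_comp_add_right]
          have e1 : (∫ x in a..(a + h n), f x) + ∫ x in (a + h n)..(b + h n), f x
              = ∫ x in a..(b + h n), f x :=
            intervalIntegral.integral_add_adjacent_intervals (hInt _ _) (hInt _ _)
          have e2 : (∫ x in a..b, f x) + ∫ x in b..(b + h n), f x
              = ∫ x in a..(b + h n), f x :=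
            intervalIntegral.integral_add_adjacent_intervals (hInt _ _) (hInt _ _)
          linarith
  -- Step C : the edge terms converge
  have edge : ∀ c : ℝ, Tendsto (fun n => (∫ x in c..(c + h n), f x) / h n) atTop (𝓝 (f c)) := by
    intro c
    have Hc : HasDerivAt (fun u => ∫ x in c..u, f x) (f c) c :=
      intervalIntegral.integral_hasDerivAt_right (hInt c c)
        (hcont.stronglyMeasurable.stronglyMeasurableAtFilter) hcont.continuousAt
    have := (hasDerivAt_iff_tendsto_slope_zero.1 Hc).comp seq_tendsto_ne
    simpa [hh, Function.comp_def, smul_eq_mul, div_eq_inv_mul, one_div] using this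
  have stepC : Tendsto (fun n => ∫ t in Ioc a b, F n t) atTop (𝓝 (f b - f a)) := by
    simp only [stepB, sub_div]
    exact (edge b).sub (edge a)
  have key : f b - f a = ∫ t in Ioc a b, deriv f t := tendsto_nhds_unique stepC stepA
  have pos : 0 ≤ ∫ t in Ioc a b, deriv f t := by
    apply integral_nonneg_of_ae
    filter_upwards [hd] with t ht using ht.2
  linarith


lemma min_lip (a b c : ℝ) : |min a c - min b c| ≤ |a - b| := by
  rcases le_total a c with h | h <;> rcases le_total b c with h' | h' <;>
    simp [min_eq_left, min_eq_right, h, h'] <;> rw [abs_sub_le_iff] <;> constructor <;>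
    [skip; skip; skip; skip] <;>
    nlinarith [le_abs_self (a - b), neg_abs_le (a - b)]

lemma cube_lip {T s t : ℝ} (hs : s ∈ Icc 0 T) (ht : t ∈ Icc 0 T) :
    |s ^ 3 - t ^ 3| ≤ 3 * T ^ 2 * |s - t| := by
  have : s ^ 3 - t ^ 3 = (s - t) * (s ^ 2 + s * t + t ^ 2) := by ring
  rw [this, abs_mul, mul_comm]
  refine mul_le_mul_of_nonneg_right ?_ (abs_nonneg _)
  rw [abs_le]
  constructor <;> nlinarith [hs.1, hs.2, ht.1, ht.2]

lemma lipOn_of_abs {f : ℝ → ℝ} {C : ℝ} {s : Set ℝ}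
    (h : ∀ a ∈ s, ∀ b ∈ s, |f a - f b| ≤ C * |a - b|) :
    LipschitzOnWith C.toNNReal f s := by
  intro a ha b hb
  rw [edist_dist, edist_dist, dist_eq_norm, dist_eq_norm, Real.norm_eq_abs, Real.norm_eq_abs]
  rw [← ENNReal.ofReal_coe_nnreal, ← ENNReal.ofReal_mul (by positivity)]
  apply ENNReal.ofReal_le_ofReal
  refine (h a ha b hb).trans (mul_le_mul_of_nonneg_right ?_ (abs_nonneg _))
  exact (Real.le_coe_toNNReal C)

lemma hasDerivAt_abs_sub (c t : ℝ) (h : t ≠ c) :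
    HasDerivAt (fun u => |u - c|) (if c < t then 1 else -1) t := by
  rcases h.lt_or_gt with h | h
  · rw [if_neg (not_lt.2 h.le)]
    have he : (fun u => c - u) =ᶠ[𝓝 t] fun u => |u - c| := by
      filter_upwards [Iio_mem_nhds h] with u hu
      rw [abs_of_neg (by simpa [sub_neg] using hu.out)]; ring
    exact ((hasDerivAt_id t).const_sub c).congr_of_eventuallyEq he.symm
  · rw [if_pos h]
    have he : (fun u => u - c) =ᶠ[𝓝 t] fun u => |u - c| := by
      filter_upwards [Ioi_mem_nhds h] with u hu
      rw [abs_of_pos (by simpa [sub_pos] using hu.out)]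
    exact ((hasDerivAt_id t).sub_const c).congr_of_eventuallyEq he.symm

lemma hasDerivAt_minCube (c t : ℝ) (h : t ≠ c) :
    HasDerivAt (fun u => (u ^ 3 - 2 * (min u c) ^ 3) / 6)
      ((if c < t then 1 else -1) * t ^ 2 / 2) t := by
  rcases h.lt_or_gt with h | h
  · rw [if_neg (not_lt.2 h.le)]
    have he : (fun u => (u ^ 3 - 2 * u ^ 3) / 6) =ᶠ[𝓝 t]
        fun u => (u ^ 3 - 2 * (min u c) ^ 3) / 6 := by
      filter_upwards [Iio_mem_nhds h] with u hu
      rw [min_eq_left hu.out.le]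
    have hd : HasDerivAt (fun u : ℝ => (u ^ 3 - 2 * u ^ 3) / 6)
        ((3 * t ^ 2 - 2 * (3 * t ^ 2)) / 6) t := by
      exact (((hasDerivAt_pow 3 t).sub ((hasDerivAt_pow 3 t).const_mul 2)).div_const 6).congr_deriv
        (by push_cast; ring)
    exact (hd.congr_of_eventuallyEq he.symm).congr_deriv (by ring)
  · rw [if_pos h]
    have he : (fun u => (u ^ 3 - 2 * c ^ 3) / 6) =ᶠ[𝓝 t]
        fun u => (u ^ 3 - 2 * (min u c) ^ 3) / 6 := by
      filter_upwards [Ioi_mem_nhds h] with u hu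
      rw [min_eq_right hu.out.le]
    have hd : HasDerivAt (fun u : ℝ => (u ^ 3 - 2 * c ^ 3) / 6) (3 * t ^ 2 / 6) t := by
      have := ((hasDerivAt_pow 3 t).sub_const (2 * c ^ 3)).div_const 6
      exact this.congr_deriv (by push_cast; ring)
    exact (hd.congr_of_eventuallyEq he.symm).congr_deriv (by ring)


/-- bounded-slope predicate -/
def LB (f : ℝ → ℝ) (K : ℝ) : Prop := ∀ s t : ℝ, |f s - f t| ≤ K * |s - t|

lemma lip_of_lb {f : ℝ → ℝ} {C : ℝ} (h : LB f C) : LipschitzWith C.toNNReal f := by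
  apply LipschitzWith.of_dist_le_mul
  intro a b
  rw [Real.dist_eq, Real.dist_eq]
  exact (h a b).trans (mul_le_mul_of_nonneg_right (Real.le_coe_toNNReal C) (abs_nonneg _))

lemma lb_mul {f g : ℝ → ℝ} {Kf Kg Mf Mg : ℝ} (hKf : 0 ≤ Kf) (hKg : 0 ≤ Kg)
    (hf : LB f Kf) (hg : LB g Kg) (hMf : ∀ t, |f t| ≤ Mf) (hMg : ∀ t, |g t| ≤ Mg) :
    LB (fun t => f t * g t) (Kf * Mg + Mf * Kg) := by
  intro s t
  have e : f s * g s - f t * g t = (f s - f t) * g s + f t * (g s - g t) := by ring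
  rw [e]
  refine (abs_add_le _ _).trans ?_
  rw [abs_mul, abs_mul]
  have A : |f s - f t| * |g s| ≤ Kf * |s - t| * Mg :=
    mul_le_mul (hf s t) (hMg s) (abs_nonneg _) (by positivity)
  have B : |f t| * |g s - g t| ≤ Mf * (Kg * |s - t|) :=
    mul_le_mul (hMf t) (hg s t) (abs_nonneg _) ((abs_nonneg _).trans (hMf t))
  refine (add_le_add A B).trans (le_of_eq (by ring))

lemma min_lip' (a b c : ℝ) : |min a c - min b c| ≤ |a - b| := by
  rcases le_total a c with h | h <;> rcases le_total b c with h' | h' <;>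
    simp [min_eq_left, min_eq_right, h, h'] <;> rw [abs_sub_le_iff] <;> constructor <;>
    nlinarith [le_abs_self (a - b), neg_abs_le (a - b)]

lemma max_lip' (a b c : ℝ) : |max a c - max b c| ≤ |a - b| := by
  rcases le_total a c with h | h <;> rcases le_total b c with h' | h' <;>
    simp [max_eq_left, max_eq_right, h, h'] <;> rw [abs_sub_le_iff] <;> constructor <;>
    nlinarith [le_abs_self (a - b), neg_abs_le (a - b)]

lemma lb_comb {f g h : ℝ → ℝ} {Kf Kg Kh α β γ : ℝ}
    (hf : LB f Kf) (hg : LB g Kg) (hh : LB h Kh) :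
    LB (fun t => α * f t + β * g t + γ * h t) (|α| * Kf + |β| * Kg + |γ| * Kh) := by
  intro s t
  have e : (α * f s + β * g s + γ * h s) - (α * f t + β * g t + γ * h t)
      = α * (f s - f t) + β * (g s - g t) + γ * (h s - h t) := by ring
  rw [e]
  have A : |α * (f s - f t)| ≤ |α| * (Kf * |s - t|) := by
    rw [abs_mul]; exact mul_le_mul_of_nonneg_left (hf s t) (abs_nonneg _)
  have B : |β * (g s - g t)| ≤ |β| * (Kg * |s - t|) := by
    rw [abs_mul]; exact mul_le_mul_of_nonneg_left (hg s t) (abs_nonneg _)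
  have C : |γ * (h s - h t)| ≤ |γ| * (Kh * |s - t|) := by
    rw [abs_mul]; exact mul_le_mul_of_nonneg_left (hh s t) (abs_nonneg _)
  refine (abs_add_three _ _ _).trans ((add_le_add (add_le_add A B) C).trans (le_of_eq (by ring)))

lemma forward {q₁ : ℝ × ℝ × ℝ} (hq : q₁ ∈ B2) : P2Reaches q₁ := by
  obtain ⟨a, b, cz⟩ := q₁
  obtain ⟨hab, hzmin, hzmax⟩ := hq
  simp only at hab hzmin hzmax
  have hb1 : -a ≤ b := by have := neg_abs_le b; linarith [hab]
  have hb2 : b ≤ a := le_trans (le_abs_self b) hab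
  have ha0 : 0 ≤ a := le_trans (abs_nonneg b) hab
  set zmin := ((a + b) ^ 3 - 4 * a ^ 3) / 24 with hzmin_def
  set zmax := (4 * a ^ 3 - (a - b) ^ 3) / 24 with hzmax_def
  -- choice of the interpolation parameter
  obtain ⟨l, hl0, hl1, hlz⟩ : ∃ l : ℝ, 0 ≤ l ∧ l ≤ 1 ∧ l * zmax + (1 - l) * zmin = cz := by
    rcases eq_or_lt_of_le (hzmin.trans hzmax : zmin ≤ zmax) with h | h
    · exact ⟨0, le_rfl, zero_le_one, by rw [← h]; linarith [le_antisymm hzmax (h ▸ hzmin)]⟩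
    · refine ⟨(cz - zmin) / (zmax - zmin), div_nonneg (by linarith) (by linarith), ?_, ?_⟩
      · rw [div_le_one (by linarith)]; linarith
      · have hne : zmax - zmin ≠ 0 := by linarith
        have hd : (cz - zmin) / (zmax - zmin) * (zmax - zmin) = cz - zmin :=
          div_mul_cancel₀ _ hne
        linear_combination hd
  set s₁ := (a + b) / 2 with hs₁
  set s₂ := (a - b) / 2 with hs₂
  have hs₁0 : 0 ≤ s₁ := by rw [hs₁]; linarith
  have hs₂0 : 0 ≤ s₂ := by rw [hs₂]; linarith
  have hs₁T : s₁ ≤ a := by rw [hs₁]; linarith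
  have hs₂T : s₂ ≤ a := by rw [hs₂]; linarith
  set x : ℝ → ℝ := fun t => t with hx
  set y : ℝ → ℝ := fun t => l * (|t - s₂| - s₂) + (1 - l) * (s₁ - |t - s₁|) with hy
  set z : ℝ → ℝ := fun t =>
    l * ((t ^ 3 - 2 * (min t s₂) ^ 3) / 6) - (1 - l) * ((t ^ 3 - 2 * (min t s₁) ^ 3) / 6) with hz
  refine ⟨a, x, y, z, ⟨ha0, ?_, ?_⟩, ?_, ?_, ?_, ?_⟩
  · -- Lipschitz
    set C : ℝ := 1 + 3 / 2 * a ^ 2 with hC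
    have hC1 : (1:ℝ) ≤ C := by rw [hC]; nlinarith [sq_nonneg a]
    have hC2 : 3 / 2 * a ^ 2 ≤ C := by rw [hC]; nlinarith [sq_nonneg a]
    have hC0 : 0 ≤ C := by linarith
    refine ⟨C.toNNReal, lipOn_of_abs ?_, lipOn_of_abs ?_, lipOn_of_abs ?_⟩
    · intro s hs t ht
      simp only [hx]
      nlinarith [abs_nonneg (s - t)]
    · intro s hs t ht
      have h2 := abs_abs_sub_abs_le_abs_sub (s - s₂) (t - s₂)
      have h1 := abs_abs_sub_abs_le_abs_sub (s - s₁) (t - s₁)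
      simp only [sub_sub_sub_cancel_right] at h1 h2
      have e : y s - y t = l * (|s - s₂| - |t - s₂|) - (1 - l) * (|s - s₁| - |t - s₁|) := by
        simp only [hy]; ring
      calc |y s - y t| ≤ l * |(|s - s₂| - |t - s₂|)| + (1 - l) * |(|s - s₁| - |t - s₁|)| := by
            rw [e]
            refine (abs_sub _ _).trans ?_
            rw [abs_mul, abs_mul, abs_of_nonneg hl0, abs_of_nonneg (by linarith : (0:ℝ) ≤ 1 - l)]
        _ ≤ l * |s - t| + (1 - l) * |s - t| :=
            add_le_add (mul_le_mul_of_nonneg_left h2 hl0)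
              (mul_le_mul_of_nonneg_left h1 (by linarith))
        _ = 1 * |s - t| := by ring
        _ ≤ C * |s - t| := mul_le_mul_of_nonneg_right hC1 (abs_nonneg _)
    · intro s hs t ht
      have key : ∀ c : ℝ, 0 ≤ c →
          |(s ^ 3 - 2 * (min s c) ^ 3) / 6 - (t ^ 3 - 2 * (min t c) ^ 3) / 6|
            ≤ 3 / 2 * a ^ 2 * |s - t| := by
        intro c hc
        have hm : min s c ∈ Icc (0:ℝ) a :=
          ⟨le_min hs.1 hc, (min_le_left _ _).trans hs.2⟩
        have hm' : min t c ∈ Icc (0:ℝ) a :=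
          ⟨le_min ht.1 hc, (min_le_left _ _).trans ht.2⟩
        have c1 := cube_lip hs ht
        have c2 := cube_lip hm hm'
        have c3 := min_lip s t c
        have e : (s ^ 3 - 2 * (min s c) ^ 3) / 6 - (t ^ 3 - 2 * (min t c) ^ 3) / 6
            = (s ^ 3 - t ^ 3) / 6 - 2 / 6 * ((min s c) ^ 3 - (min t c) ^ 3) := by ring
        rw [e]
        refine (abs_sub _ _).trans ?_
        rw [abs_div, abs_mul, abs_of_nonneg (by norm_num : (0:ℝ) ≤ 2/6)]
        have h6 : |(6:ℝ)| = 6 := by norm_num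
        rw [h6]
        have c3' : 3 * a ^ 2 * |min s c - min t c| ≤ 3 * a ^ 2 * |s - t| :=
          mul_le_mul_of_nonneg_left c3 (by positivity)
        have c2' : |(min s c) ^ 3 - (min t c) ^ 3| ≤ 3 * a ^ 2 * |s - t| := c2.trans c3'
        linarith
      have k2 := key s₂ hs₂0
      have k1 := key s₁ hs₁0
      have e : z s - z t = l * ((s ^ 3 - 2 * (min s s₂) ^ 3) / 6 - (t ^ 3 - 2 * (min t s₂) ^ 3) / 6)
          - (1 - l) * ((s ^ 3 - 2 * (min s s₁) ^ 3) / 6 - (t ^ 3 - 2 * (min t s₁) ^ 3) / 6) := by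
        simp only [hz]; ring
      calc |z s - z t| ≤ l * (3 / 2 * a ^ 2 * |s - t|) + (1 - l) * (3 / 2 * a ^ 2 * |s - t|) := by
            rw [e]
            refine (abs_sub _ _).trans ?_
            rw [abs_mul, abs_mul, abs_of_nonneg hl0, abs_of_nonneg (by linarith : (0:ℝ) ≤ 1 - l)]
            exact add_le_add (mul_le_mul_of_nonneg_left k2 hl0)
              (mul_le_mul_of_nonneg_left k1 (by linarith))
        _ = 3 / 2 * a ^ 2 * |s - t| := by ring
        _ ≤ C * |s - t| := mul_le_mul_of_nonneg_right hC2 (abs_nonneg _)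
  · -- a.e. derivative conditions
    apply ae_restrict_of_ae
    have hnull : ∀ᵐ t : ℝ, t ∉ ({s₁, s₂} : Set ℝ) := by
      have : volume ({s₁, s₂} : Set ℝ) = 0 :=
        Set.Countable.measure_zero (Set.to_countable _) _
      exact measure_eq_zero_iff_ae_notMem.1 this
    filter_upwards [hnull] with t ht
    have ht1 : t ≠ s₁ := fun h => ht (by simp [h])
    have ht2 : t ≠ s₂ := fun h => ht (by simp [h])
    set e₁ : ℝ := if s₁ < t then 1 else -1 with he₁
    set e₂ : ℝ := if s₂ < t then 1 else -1 with he₂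
    have hx' : HasDerivAt x 1 t := hasDerivAt_id t
    have hy' : HasDerivAt y (l * e₂ + (1 - l) * (-e₁)) t := by
      have h2 := ((hasDerivAt_abs_sub s₂ t ht2).sub_const s₂).const_mul l
      have h1 := ((hasDerivAt_abs_sub s₁ t ht1).const_sub s₁).const_mul (1 - l)
      exact (h2.add h1).congr_deriv (by simp only [he₁, he₂]; try ring)
    have hz' : HasDerivAt z (t ^ 2 * (l * e₂ + (1 - l) * (-e₁)) / 2) t := by
      have h2 := (hasDerivAt_minCube s₂ t ht2).const_mul l
      have h1 := (hasDerivAt_minCube s₁ t ht1).const_mul (1 - l)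
      exact (h2.sub h1).congr_deriv (by simp only [he₁, he₂]; try ring)
    rw [hx'.deriv, hy'.deriv, hz'.deriv]
    refine ⟨hx', hy', hz', ?_, by simp only [hx]; try ring⟩
    rw [he₁, he₂]
    split_ifs <;> rw [abs_le] <;> constructor <;> linarith
  · simp [hx]
  · simp only [hy]
    rw [abs_of_nonpos (by linarith), abs_of_nonpos (by linarith)]
    ring
  · simp only [hz, min_eq_left hs₂0, min_eq_left hs₁0]
    norm_num
  · have hy_end : y a = b := by
      simp only [hy]
      rw [abs_of_nonneg (by linarith : (0:ℝ) ≤ a - s₂), abs_of_nonneg (by linarith)]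
      rw [hs₁, hs₂]; ring
    have hz_end : z a = cz := by
      simp only [hz, min_eq_right hs₂T, min_eq_right hs₁T]
      rw [← hlz, hzmax_def, hzmin_def, hs₁, hs₂]; ring
    simp only [hx, hy_end, hz_end]


lemma backward {q₁ : ℝ × ℝ × ℝ} (h : P2Reaches q₁) : q₁ ∈ B2 := by
  obtain ⟨T, x, y, z, ⟨hT, ⟨K, hKx, hKy, hKz⟩, hae⟩, hx0, hy0, hz0, rfl⟩ := h
  set c : ℝ → ℝ := fun t => max 0 (min T t) with hc
  have hc_mem : ∀ t, c t ∈ Icc 0 T := fun t =>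
    ⟨le_max_left _ _, max_le hT (min_le_left _ _)⟩
  have hc_id : ∀ t ∈ Icc 0 T, c t = t := fun t ht => by
    rw [hc]; simp only [min_eq_right ht.2, max_eq_right ht.1]
  set X : ℝ → ℝ := fun t => x (c t) with hX
  set Y : ℝ → ℝ := fun t => y (c t) with hY
  set Z : ℝ → ℝ := fun t => z (c t) with hZ
  have hc0 : c 0 = 0 := hc_id 0 ⟨le_rfl, hT⟩
  have hcT : c T = T := hc_id T ⟨hT, le_rfl⟩
  have hXT : X T = x T := by rw [hX]; simp [hcT]
  have hYT : Y T = y T := by rw [hY]; simp [hcT]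
  have hZT : Z T = z T := by rw [hZ]; simp [hcT]
  have hX0 : X 0 = 0 := by rw [hX]; simp [hc0, hx0]
  have hY0 : Y 0 = 0 := by rw [hY]; simp [hc0, hy0]
  have hZ0 : Z 0 = 0 := by rw [hZ]; simp [hc0, hz0]
  -- Lipschitz bounds for the clamp
  have hc_lb : LB c 1 := by
    intro s t
    rw [hc]
    simp only [one_mul]
    calc |max 0 (min T s) - max 0 (min T t)|
        = |max (min T s) 0 - max (min T t) 0| := by rw [max_comm, max_comm (min T t)]
      _ ≤ |min T s - min T t| := max_lip' _ _ _
      _ = |min s T - min t T| := by rw [min_comm, min_comm T t]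
      _ ≤ |s - t| := min_lip' _ _ _
  -- slope and size bounds for X Y Z
  have hlb : ∀ (f : ℝ → ℝ), LipschitzOnWith K f (Icc 0 T) → LB (fun t => f (c t)) K := by
    intro f hf s t
    have := hf.dist_le_mul (c s) (hc_mem s) (c t) (hc_mem t)
    rw [Real.dist_eq, Real.dist_eq] at this
    refine this.trans ?_
    exact mul_le_mul_of_nonneg_left (hc_lb s t |>.trans_eq (one_mul _)) K.2
  have hbX : LB X K := hlb x hKx
  have hbY : LB Y K := hlb y hKy
  have hbZ : LB Z K := hlb z hKz
  set M : ℝ := K * T with hM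
  have hM0 : 0 ≤ M := by positivity
  have hMf : ∀ (f : ℝ → ℝ), f 0 = 0 → LipschitzOnWith K f (Icc 0 T) →
      (∀ t, |f (c t)| ≤ M) := by
    intro f hf0 hf t
    have h1 := hf.dist_le_mul (c t) (hc_mem t) 0 ⟨le_rfl, hT⟩
    rw [Real.dist_eq, Real.dist_eq, hf0, sub_zero, sub_zero] at h1
    refine h1.trans ?_
    rw [hM]
    refine mul_le_mul_of_nonneg_left ?_ K.2
    rw [abs_of_nonneg (hc_mem t).1]
    exact (hc_mem t).2
  have hMX : ∀ t, |X t| ≤ M := hMf x hx0 hKx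
  have hMY : ∀ t, |Y t| ≤ M := hMf y hy0 hKy
  -- global a.e. derivative statement
  have hnull : ∀ᵐ t : ℝ, t ∉ ({0, T} : Set ℝ) :=
    measure_eq_zero_iff_ae_notMem.1 (Set.Countable.measure_zero (Set.to_countable _) _)
  have G : ∀ᵐ t : ℝ, HasDerivAt X (deriv X t) t ∧ HasDerivAt Y (deriv Y t) t ∧
      HasDerivAt Z (deriv Z t) t ∧ |deriv Y t| ≤ deriv X t ∧
      deriv Z t = (X t) ^ 2 * deriv Y t / 2 := by
    filter_upwards [ae_imp_of_ae_restrict hae, hnull] with t hP ht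
    have ht0 : t ≠ 0 := fun h => ht (by simp [h])
    have htT : t ≠ T := fun h => ht (by simp [h])
    have hconst : ∀ s₀ : Set ℝ, IsOpen s₀ → t ∈ s₀ → (∀ u ∈ s₀, c u = c t) →
        HasDerivAt X (deriv X t) t ∧ HasDerivAt Y (deriv Y t) t ∧
        HasDerivAt Z (deriv Z t) t ∧ |deriv Y t| ≤ deriv X t ∧
        deriv Z t = (X t) ^ 2 * deriv Y t / 2 := by
      intro s₀ hs₀ hts₀ hcu
      have key : ∀ f : ℝ → ℝ, HasDerivAt (fun u => f (c u)) 0 t := by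
        intro f
        have he : (fun _ : ℝ => f (c t)) =ᶠ[𝓝 t] (fun u => f (c u)) := by
          filter_upwards [hs₀.mem_nhds hts₀] with u hu
          rw [hcu u hu]
        exact (hasDerivAt_const t (f (c t))).congr_of_eventuallyEq he.symm
      have dX0 : deriv X t = 0 := (key x).deriv
      have dY0 : deriv Y t = 0 := (key y).deriv
      have dZ0 : deriv Z t = 0 := (key z).deriv
      rw [dX0, dY0, dZ0]
      exact ⟨key x, key y, key z, by simp, by simp⟩
    rcases lt_trichotomy t 0 with h | h | h
    · have hv : ∀ v : ℝ, v < 0 → c v = 0 := by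
        intro v hv
        rw [hc]; simp only
        rw [min_eq_right (hv.le.trans hT), max_eq_left hv.le]
      refine hconst (Iio 0) isOpen_Iio h ?_
      intro u hu
      rw [hv u hu.out, hv t h]
    · exact absurd h ht0
    rcases lt_trichotomy t T with h' | h' | h'
    · -- main case : t ∈ Ioo 0 T
      have hmem : Ioo (0:ℝ) T ∈ 𝓝 t := isOpen_Ioo.mem_nhds ⟨h, h'⟩
      have heq : ∀ f : ℝ → ℝ, (fun u => f (c u)) =ᶠ[𝓝 t] f := by
        intro f
        filter_upwards [hmem] with u hu
        rw [hc_id u ⟨hu.1.le, hu.2.le⟩]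
      obtain ⟨hdx, hdy, hdz, hxy, hzz⟩ := hP ⟨h.le, h'.le⟩
      have heqX : X =ᶠ[𝓝 t] x := by rw [hX]; exact heq x
      have heqY : Y =ᶠ[𝓝 t] y := by rw [hY]; exact heq y
      have heqZ : Z =ᶠ[𝓝 t] z := by rw [hZ]; exact heq z
      have hdX : HasDerivAt X (deriv x t) t := hdx.congr_of_eventuallyEq heqX
      have hdY : HasDerivAt Y (deriv y t) t := hdy.congr_of_eventuallyEq heqY
      have hdZ : HasDerivAt Z (deriv z t) t := hdz.congr_of_eventuallyEq heqZ
      rw [hdX.deriv, hdY.deriv, hdZ.deriv]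
      have hXt : X t = x t := by rw [hX]; simp [hc_id t ⟨h.le, h'.le⟩]
      exact ⟨hdX, hdY, hdZ, hxy, by rw [hXt]; exact hzz⟩
    · exact absurd h' htT
    · have hv : ∀ v : ℝ, T < v → c v = T := by
        intro v hv
        rw [hc]; simp only
        rw [min_eq_left hv.le, max_eq_right hT]
      refine hconst (Ioi T) isOpen_Ioi h' ?_
      intro u hu
      rw [hv u hu.out, hv t h']
  -- monotonicity consequences
  have mono : ∀ f : ℝ → ℝ, ∀ C : ℝ, LB f C →
      (∀ᵐ t : ℝ, HasDerivAt f (deriv f t) t ∧ 0 ≤ deriv f t) →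
      ∀ s, 0 ≤ s → f 0 ≤ f s := by
    intro f C hflb hfd s hs
    exact lip_mono (lip_of_lb hflb) hs (ae_restrict_of_ae hfd)
  have h1 : ∀ s, 0 ≤ s → 0 ≤ X s - Y s := by
    intro s hs
    have := mono (fun u => X u - Y u) (K + K) (by
      intro u v
      have := hbX u v; have := hbY u v
      calc |(X u - Y u) - (X v - Y v)| = |(X u - X v) - (Y u - Y v)| := by ring_nf
        _ ≤ |X u - X v| + |Y u - Y v| := abs_sub _ _
        _ ≤ (K + K) * |u - v| := by push_cast; linarith) (by
      filter_upwards [G] with t ht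
      have hd : HasDerivAt (fun u => X u - Y u) (deriv X t - deriv Y t) t := ht.1.sub ht.2.1
      rw [hd.deriv]
      exact ⟨hd, by linarith [le_abs_self (deriv Y t), ht.2.2.2.1]⟩) s hs
    simp only [hX0, hY0] at this
    linarith
  have h2 : ∀ s, 0 ≤ s → 0 ≤ X s + Y s := by
    intro s hs
    have := mono (fun u => X u + Y u) (K + K) (by
      intro u v
      have := hbX u v; have := hbY u v
      calc |(X u + Y u) - (X v + Y v)| = |(X u - X v) + (Y u - Y v)| := by ring_nf
        _ ≤ |X u - X v| + |Y u - Y v| := abs_add_le _ _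
        _ ≤ (K + K) * |u - v| := by push_cast; linarith) (by
      filter_upwards [G] with t ht
      have hd : HasDerivAt (fun u => X u + Y u) (deriv X t + deriv Y t) t := ht.1.add ht.2.1
      rw [hd.deriv]
      exact ⟨hd, by linarith [neg_abs_le (deriv Y t), ht.2.2.2.1]⟩) s hs
    simp only [hX0, hY0] at this
    linarith
  -- pointwise positivity everywhere
  have h1' : ∀ s : ℝ, 0 ≤ X s - Y s := by
    intro s
    have e : X s = X (c s) := by rw [hX]; simp [hc_id (c s) (hc_mem s)]
    have e' : Y s = Y (c s) := by rw [hY]; simp [hc_id (c s) (hc_mem s)]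
    rw [e, e']; exact h1 (c s) (hc_mem s).1
  have h2' : ∀ s : ℝ, 0 ≤ X s + Y s := by
    intro s
    have e : X s = X (c s) := by rw [hX]; simp [hc_id (c s) (hc_mem s)]
    have e' : Y s = Y (c s) := by rw [hY]; simp [hc_id (c s) (hc_mem s)]
    rw [e, e']; exact h2 (c s) (hc_mem s).1
  -- slope/size bounds for the auxiliary cubic functions
  set K' : ℝ := (K : ℝ) with hK'
  have hK'0 : (0:ℝ) ≤ K' := K.2
  have hbu : LB (fun t => X t - Y t) (K' + K') := by
    intro u v
    calc |(X u - Y u) - (X v - Y v)| = |(X u - X v) - (Y u - Y v)| := by ring_nf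
      _ ≤ |X u - X v| + |Y u - Y v| := abs_sub _ _
      _ ≤ (K' + K') * |u - v| := by have := hbX u v; have := hbY u v; linarith
  have hMu : ∀ t, |X t - Y t| ≤ M + M := fun t =>
    (abs_sub _ _).trans (add_le_add (hMX t) (hMY t))
  have hbv : LB (fun t => X t + Y t) (K' + K') := by
    intro u v
    calc |(X u + Y u) - (X v + Y v)| = |(X u - X v) + (Y u - Y v)| := by ring_nf
      _ ≤ |X u - X v| + |Y u - Y v| := abs_add_le _ _
      _ ≤ (K' + K') * |u - v| := by have := hbX u v; have := hbY u v; linarith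
  have hMv : ∀ t, |X t + Y t| ≤ M + M := fun t =>
    (abs_add_le _ _).trans (add_le_add (hMX t) (hMY t))
  have cube : ∀ (f : ℝ → ℝ) (Kf Mf : ℝ), 0 ≤ Kf → 0 ≤ Mf → LB f Kf → (∀ t, |f t| ≤ Mf) →
      LB (fun t => f t * f t * f t) ((Kf * Mf + Mf * Kf) * Mf + Mf * Mf * Kf) := by
    intro f Kf Mf hKf hMf0 hf hMff
    have h2' : LB (fun t => f t * f t) (Kf * Mf + Mf * Kf) := lb_mul hKf hKf hf hf hMff hMff
    have hM2 : ∀ t, |f t * f t| ≤ Mf * Mf := fun t => by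
      rw [abs_mul]; exact mul_le_mul (hMff t) (hMff t) (abs_nonneg _) hMf0
    exact lb_mul (by nlinarith [mul_nonneg hKf hMf0, mul_nonneg hMf0 hKf]) hKf h2' hf hM2 hMff
  have hbX3 := cube X K' M hK'0 hM0 hbX hMX
  have hbu3 := cube (fun t => X t - Y t) (K' + K') (M + M) (by linarith) (by linarith) hbu hMu
  have hbv3 := cube (fun t => X t + Y t) (K' + K') (M + M) (by linarith) (by linarith) hbv hMv
  -- the two comparison functions
  have habs : ∀ t, |deriv Y t| ≤ deriv X t → 0 ≤ deriv X t - deriv Y t ∧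
      0 ≤ deriv X t + deriv Y t := by
    intro t h
    constructor <;> [linarith [le_abs_self (deriv Y t)]; linarith [neg_abs_le (deriv Y t)]]
  -- upper bound function φ
  have hφ : z 0 ≤ (4 * (x T) ^ 3 - (x T - y T) ^ 3) / 24 - z T + z 0 := by
    have hbφ : LB (fun t => (4/24) * (X t * X t * X t)
        + (-1/24) * ((X t - Y t) * (X t - Y t) * (X t - Y t)) + (-1) * Z t)
        (|(4:ℝ)/24| * (((K' * M + M * K') * M + M * M * K'))
          + |(-1:ℝ)/24| * (((K' + K') * (M + M) + (M + M) * (K' + K')) * (M + M)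
            + (M + M) * (M + M) * (K' + K'))
          + |(-1:ℝ)| * K') := lb_comb hbX3 hbu3 hbZ
    have haeφ : ∀ᵐ t : ℝ, HasDerivAt (fun t => (4/24) * (X t * X t * X t)
        + (-1/24) * ((X t - Y t) * (X t - Y t) * (X t - Y t)) + (-1) * Z t)
        (deriv (fun t => (4/24) * (X t * X t * X t)
        + (-1/24) * ((X t - Y t) * (X t - Y t) * (X t - Y t)) + (-1) * Z t) t) t ∧
        0 ≤ deriv (fun t => (4/24) * (X t * X t * X t)
        + (-1/24) * ((X t - Y t) * (X t - Y t) * (X t - Y t)) + (-1) * Z t) t := by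
      filter_upwards [G] with t ht
      obtain ⟨hdX, hdY, hdZ, hxy, hzz⟩ := ht
      have hdu : HasDerivAt (fun u => X u - Y u) (deriv X t - deriv Y t) t := hdX.sub hdY
      have hd3X := (hdX.mul hdX).mul hdX
      have hd3u := (hdu.mul hdu).mul hdu
      have hdφ := ((hd3X.const_mul ((4:ℝ)/24)).add (hd3u.const_mul ((-1:ℝ)/24))).add
        (hdZ.const_mul (-1:ℝ))
      have hdφ' := hdφ.congr_deriv (show _ = (deriv X t - deriv Y t) *
          ((X t + Y t) * (3 * X t - Y t)) / 8 by rw [hzz]; simp only [Pi.mul_apply]; ring)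
      replace hdφ' : HasDerivAt (fun t => (4/24) * (X t * X t * X t)
          + (-1/24) * ((X t - Y t) * (X t - Y t) * (X t - Y t)) + (-1) * Z t) _ t := hdφ'
      rw [hdφ'.deriv]
      refine ⟨hdφ', ?_⟩
      have e1 := (habs t hxy).1
      have e2 := h2' t
      have e3 : 0 ≤ 3 * X t - Y t := by linarith [h1' t, h2' t]
      have := mul_nonneg e1 (mul_nonneg e2 e3)
      linarith
    have := mono _ _ hbφ haeφ T hT
    simp only [hX0, hY0, hZ0, hXT, hYT, hZT] at this
    nlinarith [this]
  -- lower bound function ψ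
  have hψ : z 0 ≤ z T - ((x T + y T) ^ 3 - 4 * (x T) ^ 3) / 24 + z 0 := by
    have hbψ : LB (fun t => (-1/24) * ((X t + Y t) * (X t + Y t) * (X t + Y t))
        + (4/24) * (X t * X t * X t) + (1:ℝ) * Z t)
        (|(-1:ℝ)/24| * (((K' + K') * (M + M) + (M + M) * (K' + K')) * (M + M)
            + (M + M) * (M + M) * (K' + K'))
          + |(4:ℝ)/24| * (((K' * M + M * K') * M + M * M * K'))
          + |(1:ℝ)| * K') := lb_comb hbv3 hbX3 hbZ
    have haeψ : ∀ᵐ t : ℝ, HasDerivAt (fun t => (-1/24) * ((X t + Y t) * (X t + Y t) * (X t + Y t))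
        + (4/24) * (X t * X t * X t) + (1:ℝ) * Z t)
        (deriv (fun t => (-1/24) * ((X t + Y t) * (X t + Y t) * (X t + Y t))
        + (4/24) * (X t * X t * X t) + (1:ℝ) * Z t) t) t ∧
        0 ≤ deriv (fun t => (-1/24) * ((X t + Y t) * (X t + Y t) * (X t + Y t))
        + (4/24) * (X t * X t * X t) + (1:ℝ) * Z t) t := by
      filter_upwards [G] with t ht
      obtain ⟨hdX, hdY, hdZ, hxy, hzz⟩ := ht
      have hdv : HasDerivAt (fun u => X u + Y u) (deriv X t + deriv Y t) t := hdX.add hdY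
      have hd3X := (hdX.mul hdX).mul hdX
      have hd3v := (hdv.mul hdv).mul hdv
      have hdψ := ((hd3v.const_mul ((-1:ℝ)/24)).add (hd3X.const_mul ((4:ℝ)/24))).add
        (hdZ.const_mul (1:ℝ))
      have hdψ' := hdψ.congr_deriv (show _ = (deriv X t + deriv Y t) *
          ((X t - Y t) * (3 * X t + Y t)) / 8 by rw [hzz]; simp only [Pi.mul_apply]; ring)
      replace hdψ' : HasDerivAt (fun t => (-1/24) * ((X t + Y t) * (X t + Y t) * (X t + Y t))
          + (4/24) * (X t * X t * X t) + (1:ℝ) * Z t) _ t := hdψ'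
      rw [hdψ'.deriv]
      refine ⟨hdψ', ?_⟩
      have e1 := (habs t hxy).2
      have e2 := h1' t
      have e3 : 0 ≤ 3 * X t + Y t := by linarith [h1' t, h2' t]
      have := mul_nonneg e1 (mul_nonneg e2 e3)
      linarith
    have := mono _ _ hbψ haeψ T hT
    simp only [hX0, hY0, hZ0, hXT, hYT, hZT] at this
    nlinarith [this]
  refine ⟨?_, ?_, ?_⟩
  · have a1 := h1 T hT
    have a2 := h2 T hT
    rw [hXT, hYT] at a1 a2
    simp only
    rw [abs_le]
    constructor <;> linarith
  · simp only
    rw [hz0] at hψ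
    linarith
  · simp only
    rw [hz0] at hφ
    linarith


/-- The attainable set of the second flat sub-Lorentzian Martinet problem from the
origin (the causal future of the origin) is exactly `B₂`. -/
theorem attainable_set_eq_B2 (q₁ : ℝ × ℝ × ℝ) : q₁ ∈ B2 ↔ P2Reaches q₁ :=
  ⟨fun h => forward h, fun h => backward h⟩
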